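/- arXiv:0706.1677 — 3 statements merged into one kernel-verified Lean document; each statement's English description precedes it below -/
import Mathlib

section
/- Let ω ⊂ ℝ^d be a Delone set with repetitivity function F : [1,∞) → [1,∞), meaning that for every D ≥ 1 and every x ∈ ω, every D-patch of ω occurs as (ω − y) ∩ B_D for some y ∈ ω ∩ B_{F(D)}(x). Then there exists κ > 0 such that card(p_ω(D)) ≤ κ · |B_{F(D)}| for all D ≥ 1, where p_ω(D) = {(−x + ω) ∩ B_D : x ∈ ω} is the set of D-patches and |B_{F(D)}| is the Lebesgue measure of the ball of radius F(D). -/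
open MeasureTheory Filter

noncomputable section

/-- The translate `-x + ξ = {-x + y : y ∈ ξ}`. -/
def transl {d : ℕ} (x : EuclideanSpace ℝ (Fin d)) (ξ : Set (EuclideanSpace ℝ (Fin d))) :
    Set (EuclideanSpace ℝ (Fin d)) := (fun y => y - x) '' ξ

/-- `ξ` is uniformly discrete with packing radius `r`. -/
def UnifDiscrete {d : ℕ} (r : ℝ) (ξ : Set (EuclideanSpace ℝ (Fin d))) : Prop :=
  ∀ x : EuclideanSpace ℝ (Fin d), (ξ ∩ Metric.ball x r).Subsingleton

/-- `ξ` is relatively dense with covering radius `R`. -/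
def RelDense {d : ℕ} (R : ℝ) (ξ : Set (EuclideanSpace ℝ (Fin d))) : Prop :=
  ∀ x : EuclideanSpace ℝ (Fin d), (ξ ∩ Metric.closedBall x R).Nonempty

/-- The set of `D`-patches of `ω`. -/
def patches {d : ℕ} (ω : Set (EuclideanSpace ℝ (Fin d))) (D : ℝ) :
    Set (Set (EuclideanSpace ℝ (Fin d))) :=
  {P | ∃ x ∈ ω, P = transl x ω ∩ Metric.closedBall 0 D}

/-- Finite local complexity. -/
def FLC {d : ℕ} (ω : Set (EuclideanSpace ℝ (Fin d))) : Prop :=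
  ∀ D : ℝ, 0 < D → (patches ω D).Finite

/-- The patch counting entropy of `ω`. -/
def hpc {d : ℕ} (ω : Set (EuclideanSpace ℝ (Fin d))) : ℝ :=
  Filter.limsup (fun n : ℕ =>
    Real.log ((patches ω (n : ℝ)).ncard) /
      (volume (Metric.closedBall (0 : EuclideanSpace ℝ (Fin d)) (n : ℝ))).toReal) atTop

/-- `F` is a repetitivity function for `ω`. -/
def RepetitivityFn {d : ℕ} (ω : Set (EuclideanSpace ℝ (Fin d))) (F : ℝ → ℝ) : Prop :=
  ∀ D : ℝ, 1 ≤ D → ∀ x ∈ ω, ∀ P ∈ patches ω D,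
    ∃ y ∈ ω ∩ Metric.closedBall x (F D), P = transl y ω ∩ Metric.closedBall 0 D

theorem patch_count_le_of_repetitivity {d : ℕ} (r R : ℝ) (hr : 0 < r) (hR : 0 < R)
    (ω : Set (EuclideanSpace ℝ (Fin d))) (hud : UnifDiscrete r ω) (hrd : RelDense R ω)
    (F : ℝ → ℝ) (hF : ∀ D : ℝ, 1 ≤ D → 1 ≤ F D) (hrep : RepetitivityFn ω F) :
    ∃ κ : ℝ, 0 < κ ∧ ∀ D : ℝ, 1 ≤ D →
      ((patches ω D).ncard : ℝ) ≤
        κ * (volume (Metric.closedBall (0 : EuclideanSpace ℝ (Fin d)) (F D))).toReal := by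
  classical
  set c : ENNReal := volume (Metric.ball (0 : EuclideanSpace ℝ (Fin d)) (r / 2)) with hc
  have hc0 : 0 < c := Metric.measure_ball_pos _ _ (by linarith)
  have hct : c < ⊤ := measure_ball_lt_top
  have hcR : 0 < c.toReal := ENNReal.toReal_pos hc0.ne' hct.ne
  -- separation of ω
  have hsep : ∀ p ∈ ω, ∀ q ∈ ω, p ≠ q → r ≤ dist p q := by
    intro p hp q hq hne
    by_contra h
    push_neg at h
    exact hne (hud p ⟨hp, Metric.mem_ball_self hr⟩
      ⟨hq, by rwa [Metric.mem_ball, dist_comm]⟩)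
  refine ⟨(1 + r / 2) ^ d / c.toReal, by positivity, ?_⟩
  intro D hD
  have hFD : 1 ≤ F D := hF D hD
  obtain ⟨x₀, hx₀ω, -⟩ := hrd 0
  set S : Set (EuclideanSpace ℝ (Fin d)) := ω ∩ Metric.closedBall x₀ (F D) with hS
  set V : ENNReal := volume (Metric.closedBall x₀ (F D + r / 2)) with hV
  have hVt : V < ⊤ := measure_closedBall_lt_top
  -- packing bound for finite subsets of S
  have key : ∀ T : Finset (EuclideanSpace ℝ (Fin d)), ↑T ⊆ S → (T.card : ENNReal) * c ≤ V := by
    intro T hT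
    have hdisj : (T : Set (EuclideanSpace ℝ (Fin d))).PairwiseDisjoint (fun p => Metric.ball p (r / 2)) := by
      intro p hp q hq hne
      exact Metric.ball_disjoint_ball
        (by linarith [hsep p (hT hp).1 q (hT hq).1 hne])
    have hball : ∀ p : EuclideanSpace ℝ (Fin d), volume (Metric.ball p (r / 2)) = c := by
      intro p
      rw [hc, Measure.addHaar_ball_center volume p]
    calc (T.card : ENNReal) * c = ∑ _p ∈ T, c := by rw [Finset.sum_const, nsmul_eq_mul]
      _ = ∑ p ∈ T, volume (Metric.ball p (r / 2)) := by simp [hball]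
      _ = volume (⋃ p ∈ T, Metric.ball p (r / 2)) :=
          (measure_biUnion_finset hdisj fun _ _ => measurableSet_ball).symm
      _ ≤ V := by
          apply measure_mono
          refine Set.iUnion₂_subset fun p hp => ?_
          refine (Metric.ball_subset_closedBall).trans
            (Metric.closedBall_subset_closedBall' ?_)
          have : dist p x₀ ≤ F D := (hT hp).2
          linarith
  -- S is finite
  have hSfin : S.Finite := by
    by_contra hinf
    obtain ⟨T, hTsub, hTfin, hTcard⟩ :=
      (Set.Infinite.exists_subset_ncard_eq hinf) (⌊V.toReal / c.toReal⌋₊ + 1)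
    have hkey := key hTfin.toFinset (by rwa [hTfin.coe_toFinset])
    have hcard : hTfin.toFinset.card = ⌊V.toReal / c.toReal⌋₊ + 1 := by
      rw [← Set.ncard_eq_toFinset_card T hTfin]; exact hTcard
    rw [hcard] at hkey
    have hreal : ((⌊V.toReal / c.toReal⌋₊ + 1 : ℕ) : ℝ) * c.toReal ≤ V.toReal := by
      have := ENNReal.toReal_mono hVt.ne hkey
      rw [ENNReal.toReal_mul, ENNReal.toReal_natCast] at this; exact this
    have hlt : V.toReal / c.toReal < (⌊V.toReal / c.toReal⌋₊ + 1 : ℕ) := by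
      push_cast
      exact Nat.lt_floor_add_one _
    have := (div_lt_iff₀ hcR).mp hlt
    linarith
  -- injection of patches into S
  have hncard : (patches ω D).ncard ≤ S.ncard := by
    have hex : ∀ P : Set (EuclideanSpace ℝ (Fin d)), ∃ y : EuclideanSpace ℝ (Fin d),
        P ∈ patches ω D → y ∈ S ∧ P = transl y ω ∩ Metric.closedBall 0 D := by
      intro P
      by_cases hP : P ∈ patches ω D
      · obtain ⟨y, hy, hPy⟩ := hrep D hD x₀ hx₀ω P hP
        exact ⟨y, fun _ => ⟨hy, hPy⟩⟩
      · exact ⟨0, fun h => absurd h hP⟩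
    choose f hf using hex
    refine Set.ncard_le_ncard_of_injOn f (fun P hP => (hf P hP).1) ?_ hSfin
    intro P hP Q hQ hfPQ
    rw [(hf P hP).2, (hf Q hQ).2, hfPQ]
  -- packing bound for S itself
  have hSbound : (S.ncard : ENNReal) * c ≤ V := by
    have := key hSfin.toFinset (by rw [hSfin.coe_toFinset])
    rwa [← Set.ncard_eq_toFinset_card S hSfin] at this
  have hSreal : (S.ncard : ℝ) * c.toReal ≤ V.toReal := by
    have := ENNReal.toReal_mono hVt.ne hSbound
    simpa [ENNReal.toReal_mul] using this
  -- volume comparison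
  have hvol : V.toReal ≤ (1 + r / 2) ^ d *
      (volume (Metric.closedBall (0 : EuclideanSpace ℝ (Fin d)) (F D))).toReal := by
    have h1 : (0:ℝ) ≤ F D + r / 2 := by linarith
    have h2 : (0:ℝ) ≤ F D := by linarith
    rw [hV, Measure.addHaar_closedBall volume x₀ h1,
      Measure.addHaar_closedBall volume (0 : EuclideanSpace ℝ (Fin d)) h2,
      finrank_euclideanSpace_fin, ENNReal.toReal_mul, ENNReal.toReal_mul, ENNReal.toReal_ofReal (by positivity),
      ENNReal.toReal_ofReal (by positivity), ← mul_assoc]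
    apply mul_le_mul_of_nonneg_right _ ENNReal.toReal_nonneg
    rw [← mul_pow]
    apply pow_le_pow_left₀ h1
    nlinarith
  -- put it together
  have h1 : ((patches ω D).ncard : ℝ) ≤ S.ncard := by exact_mod_cast hncard
  rw [div_mul_eq_mul_div, le_div_iff₀ hcR]
  calc ((patches ω D).ncard : ℝ) * c.toReal ≤ (S.ncard : ℝ) * c.toReal :=
        mul_le_mul_of_nonneg_right h1 hcR.le
    _ ≤ V.toReal := hSreal
    _ ≤ (1 + r / 2) ^ d * (volume (Metric.closedBall (0 : EuclideanSpace ℝ (Fin d)) (F D))).toReal := hvol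
end
end

section
/- Let ω ⊂ ℝ^d be an (r,R)-Delone set of finite local complexity. For every n ≥ 1, the collection of representatives Ξ^(n) ⊂ Ω(ω) of the n-patches at the origin (one element of the hull per n-patch, each containing 0 and realizing that patch in B_n) is an (n, ε)-separated set for every ε < ε₀ := min{1/√2, r/2, 1/(2R)}. Consequently, card(p_ω(n)) ≤ N(n, ε) for all ε < ε₀. -/
open MeasureTheory Filter

noncomputable section

/-- The Delone metric on uniformly discrete subsets of `ℝ^d`. -/
def deloneDist {d : ℕ} (ξ₁ ξ₂ : Set (EuclideanSpace ℝ (Fin d))) : ℝ :=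
  min (1 / Real.sqrt 2)
    (sInf {S : ℝ | 0 < S ∧ ∃ u ∈ Metric.closedBall (0 : EuclideanSpace ℝ (Fin d)) S,
      ∃ v ∈ Metric.closedBall (0 : EuclideanSpace ℝ (Fin d)) S,
        transl u ξ₁ ∩ Metric.closedBall 0 (1 / S) =
          transl v ξ₂ ∩ Metric.closedBall 0 (1 / S)})

/-- An `(r,R)`-Delone set. -/
def IsDelone {d : ℕ} (r R : ℝ) (ω : Set (EuclideanSpace ℝ (Fin d))) : Prop :=
  UnifDiscrete r ω ∧ RelDense R ω

/-- The hull of `ω`: the closure of the translation orbit of `ω` in the space of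
`(r,R)`-Delone sets equipped with the Delone metric. -/
def hull {d : ℕ} (r R : ℝ) (ω : Set (EuclideanSpace ℝ (Fin d))) :
    Set (Set (EuclideanSpace ℝ (Fin d))) :=
  {ω' | IsDelone r R ω' ∧ ∀ ε : ℝ, 0 < ε →
    ∃ x : EuclideanSpace ℝ (Fin d), deloneDist (transl x ω) ω' < ε}

/-- `Ξ` is a `(D,ε)`-separated set in the hull (w.r.t. the Delone metric and the
translation action). -/
def IsSepHull {d : ℕ} (D ε : ℝ) (Ξ : Set (Set (EuclideanSpace ℝ (Fin d)))) : Prop :=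
  ∀ ξ₁ ∈ Ξ, ∀ ξ₂ ∈ Ξ, ξ₁ ≠ ξ₂ →
    ∃ x ∈ Metric.closedBall (0 : EuclideanSpace ℝ (Fin d)) D,
      ε < deloneDist (transl x ξ₁) (transl x ξ₂)

/-- `N(D,ε)`: the maximal cardinality of a `(D,ε)`-separated subset of the hull. -/
def sepNumHull {d : ℕ} (r R : ℝ) (ω : Set (EuclideanSpace ℝ (Fin d))) (D ε : ℝ) : ℕ :=
  sSup {k : ℕ | ∃ Ξ : Finset (Set (EuclideanSpace ℝ (Fin d))),
    (Ξ : Set (Set (EuclideanSpace ℝ (Fin d)))) ⊆ hull r R ω ∧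
    IsSepHull D ε (Ξ : Set (Set (EuclideanSpace ℝ (Fin d)))) ∧ Ξ.card = k}

/-- `H_ε(Ω(ω), α) = limsup_n (1/|B_n|) log N(n,ε)`. -/
def HepsHull {d : ℕ} (r R : ℝ) (ω : Set (EuclideanSpace ℝ (Fin d))) (ε : ℝ) : ℝ :=
  Filter.limsup (fun n : ℕ =>
    Real.log (sepNumHull r R ω (n : ℝ) ε) /
      (volume (Metric.closedBall (0 : EuclideanSpace ℝ (Fin d)) (n : ℝ))).toReal) atTop

/-- Topological entropy of the hull dynamical system, as the supremum (= limit as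
`ε → 0`, by antitonicity) of the `H_ε`. -/
def htopHull {d : ℕ} (r R : ℝ) (ω : Set (EuclideanSpace ℝ (Fin d))) : ℝ :=
  ⨆ ε : {ε : ℝ // 0 < ε}, HepsHull r R ω ε

lemma mem_transl {d : ℕ} {x y : EuclideanSpace ℝ (Fin d)} {ξ : Set (EuclideanSpace ℝ (Fin d))} :
    y ∈ transl x ξ ↔ y + x ∈ ξ := by
  constructor
  · rintro ⟨a, ha, rfl⟩; simpa using ha
  · intro h; exact ⟨y + x, h, add_sub_cancel_right y x⟩

lemma transl_transl {d : ℕ} (u x : EuclideanSpace ℝ (Fin d)) (ξ : Set (EuclideanSpace ℝ (Fin d))) :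
    transl u (transl x ξ) = transl (x + u) ξ := by
  ext y
  simp only [mem_transl]
  rw [show y + u + x = y + (x + u) by abel]

lemma unifDiscrete_transl {d : ℕ} {r : ℝ} {ξ : Set (EuclideanSpace ℝ (Fin d))}
    (h : UnifDiscrete r ξ) (a : EuclideanSpace ℝ (Fin d)) : UnifDiscrete r (transl a ξ) := by
  intro x y₁ hy₁ y₂ hy₂
  have h1 : y₁ + a ∈ ξ ∩ Metric.ball (x + a) r := by
    refine ⟨mem_transl.1 hy₁.1, ?_⟩
    have := hy₁.2
    simp only [Metric.mem_ball, dist_eq_norm] at *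
    simpa using this
  have h2 : y₂ + a ∈ ξ ∩ Metric.ball (x + a) r := by
    refine ⟨mem_transl.1 hy₂.1, ?_⟩
    have := hy₂.2
    simp only [Metric.mem_ball, dist_eq_norm] at *
    simpa using this
  have := h (x + a) h1 h2
  exact add_right_cancel this

lemma relDense_transl {d : ℕ} {R : ℝ} {ξ : Set (EuclideanSpace ℝ (Fin d))}
    (h : RelDense R ξ) (a : EuclideanSpace ℝ (Fin d)) : RelDense R (transl a ξ) := by
  intro x
  obtain ⟨z, hz, hzb⟩ := h (x + a)
  refine ⟨z - a, mem_transl.2 (by simpa using hz), ?_⟩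
  simp only [Metric.mem_closedBall, dist_eq_norm] at *
  rw [show z - a - x = z - (x + a) by abel]; simpa using hzb

lemma isDelone_transl {d : ℕ} {r R : ℝ} {ξ : Set (EuclideanSpace ℝ (Fin d))}
    (h : IsDelone r R ξ) (a : EuclideanSpace ℝ (Fin d)) : IsDelone r R (transl a ξ) :=
  ⟨unifDiscrete_transl h.1 a, relDense_transl h.2 a⟩

def dset {d : ℕ} (ξ₁ ξ₂ : Set (EuclideanSpace ℝ (Fin d))) : Set ℝ :=
  {S : ℝ | 0 < S ∧ ∃ u ∈ Metric.closedBall (0 : EuclideanSpace ℝ (Fin d)) S,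
      ∃ v ∈ Metric.closedBall (0 : EuclideanSpace ℝ (Fin d)) S,
        transl u ξ₁ ∩ Metric.closedBall 0 (1 / S) =
          transl v ξ₂ ∩ Metric.closedBall 0 (1 / S)}

lemma deloneDist_eq {d : ℕ} (ξ₁ ξ₂ : Set (EuclideanSpace ℝ (Fin d))) :
    deloneDist ξ₁ ξ₂ = min (1 / Real.sqrt 2) (sInf (dset ξ₁ ξ₂)) := rfl

lemma dset_bddBelow {d : ℕ} (ξ₁ ξ₂ : Set (EuclideanSpace ℝ (Fin d))) :
    BddBelow (dset ξ₁ ξ₂) := ⟨0, fun S hS => hS.1.le⟩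

lemma dset_nonempty {d : ℕ} {r R : ℝ} (hr : 0 < r) (hrR : r ≤ R)
    {ξ₁ ξ₂ : Set (EuclideanSpace ℝ (Fin d))}
    (h₁ : IsDelone r R ξ₁) (h₂ : IsDelone r R ξ₂) : (dset ξ₁ ξ₂).Nonempty := by
  have hR0 : 0 < R := hr.trans_le hrR
  set S : ℝ := R + 2 / r with hSdef
  have hS0 : 0 < S := by positivity
  have hSr : 1 / S < r := by
    have h2r : 2 / r ≤ S := by simp [hSdef]; positivity
    have : 1 / S ≤ 1 / (2 / r) := one_div_le_one_div_of_le (by positivity) h2r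
    calc 1 / S ≤ r / 2 := by rwa [one_div_div] at this
      _ < r := by linarith
  have key : ∀ ξ : Set (EuclideanSpace ℝ (Fin d)), UnifDiscrete r ξ →
      ∀ u ∈ ξ, transl u ξ ∩ Metric.closedBall 0 (1 / S) = {0} := by
    intro ξ hud u hu
    ext y
    simp only [Set.mem_inter_iff, mem_transl, mem_closedBall_zero_iff, Set.mem_singleton_iff]
    constructor
    · rintro ⟨hyξ, hyn⟩
      have h1 : y + u ∈ ξ ∩ Metric.ball u r := by
        refine ⟨hyξ, ?_⟩
        simp only [Metric.mem_ball, dist_eq_norm]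
        simpa using lt_of_le_of_lt hyn hSr
      have h2 : u ∈ ξ ∩ Metric.ball u r := ⟨hu, Metric.mem_ball_self hr⟩
      have := hud u h1 h2
      simpa using this
    · rintro rfl
      exact ⟨by simpa using hu, by rw [norm_zero]; positivity⟩
  obtain ⟨u, hu, hub⟩ := h₁.2 0
  obtain ⟨v, hv, hvb⟩ := h₂.2 0
  refine ⟨S, hS0, u, ?_, v, ?_, ?_⟩
  · exact Metric.closedBall_subset_closedBall (hSdef ▸ le_add_of_nonneg_right (div_pos two_pos hr).le) hub
  · exact Metric.closedBall_subset_closedBall (hSdef ▸ le_add_of_nonneg_right (div_pos two_pos hr).le) hvb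
  · rw [key ξ₁ h₁.1 u hu, key ξ₂ h₂.1 v hv]

lemma deloneDist_le_of_mem {d : ℕ} {ξ₁ ξ₂ : Set (EuclideanSpace ℝ (Fin d))} {S : ℝ}
    (hS : S ∈ dset ξ₁ ξ₂) : deloneDist ξ₁ ξ₂ ≤ S :=
  (min_le_right _ _).trans (csInf_le (dset_bddBelow _ _) hS)

lemma exists_S' {d : ℕ} {r R : ℝ} (hr : 0 < r) (hrR : r ≤ R)
    {ξ₁ ξ₂ : Set (EuclideanSpace ℝ (Fin d))}
    (h₁ : IsDelone r R ξ₁) (h₂ : IsDelone r R ξ₂) {ε' : ℝ}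
    (hd : deloneDist ξ₁ ξ₂ < ε') (hε' : ε' ≤ 1 / Real.sqrt 2) :
    ∃ S : ℝ, ∃ u v : EuclideanSpace ℝ (Fin d), 0 < S ∧ S < ε' ∧ ‖u‖ ≤ S ∧ ‖v‖ ≤ S ∧
      transl u ξ₁ ∩ Metric.closedBall 0 (1 / S) =
        transl v ξ₂ ∩ Metric.closedBall 0 (1 / S) := by
  rw [deloneDist_eq] at hd
  have hinf : sInf (dset ξ₁ ξ₂) < ε' := by
    rcases min_lt_iff.1 hd with h | h
    · exact absurd hε' (not_le.2 h)
    · exact h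
  obtain ⟨S, hSmem, hSlt⟩ := (csInf_lt_iff (dset_bddBelow _ _) (dset_nonempty hr hrR h₁ h₂)).1 hinf
  obtain ⟨hS0, u, hu, v, hv, heq⟩ := hSmem
  exact ⟨S, u, v, hS0, hSlt, mem_closedBall_zero_iff.1 hu, mem_closedBall_zero_iff.1 hv, heq⟩

lemma agree_lemma {d : ℕ} {r R : ℝ} (hr : 0 < r) (hrR : r ≤ R)
    {ξ₁ ξ₂ : Set (EuclideanSpace ℝ (Fin d))}
    (hud₂ : UnifDiscrete r ξ₂) {ε' : ℝ} (hε'0 : 0 < ε') (hε'r : ε' < r / 2)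
    (hε'R : ε' < 1 / (2 * R))
    {x : EuclideanSpace ℝ (Fin d)}
    (hcl : ∃ S : ℝ, ∃ u v : EuclideanSpace ℝ (Fin d), 0 < S ∧ S ≤ ε' ∧ ‖u‖ ≤ S ∧ ‖v‖ ≤ S ∧
      transl (x + u) ξ₁ ∩ Metric.closedBall 0 (1 / S) =
        transl (x + v) ξ₂ ∩ Metric.closedBall 0 (1 / S))
    {p : EuclideanSpace ℝ (Fin d)} (hp₁ : p ∈ ξ₁) (hp₂ : p ∈ ξ₂) (hpx : dist p x ≤ R) :
    ∀ q : EuclideanSpace ℝ (Fin d), dist q x ≤ 2 * R - ε' → (q ∈ ξ₁ ↔ q ∈ ξ₂) := by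
  have hR0 : 0 < R := hr.trans_le hrR
  obtain ⟨S, u, v, hS0, hSε', hu, hv, hset⟩ := hcl
  have h2R : 2 * R < 1 / ε' := by
    rw [lt_div_iff₀ hε'0]
    rw [lt_div_iff₀ (by positivity : (0:ℝ) < 2 * R)] at hε'R
    linarith [hε'R]
  have hSinv : 1 / ε' ≤ 1 / S := one_div_le_one_div_of_le hS0 hSε'
  have h2RS : 2 * R ≤ 1 / S := (h2R.le).trans hSinv
  have hε'R' : ε' ≤ R := by linarith
  rw [dist_eq_norm] at hpx
  -- step 1: force u = v
  have hp_mem : p - x - u ∈ transl (x + u) ξ₁ ∩ Metric.closedBall 0 (1 / S) := by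
    refine ⟨mem_transl.2 (by rw [show p - x - u + (x + u) = p by abel]; exact hp₁), ?_⟩
    rw [mem_closedBall_zero_iff]
    calc ‖p - x - u‖ ≤ ‖p - x‖ + ‖u‖ := norm_sub_le _ _
      _ ≤ R + ε' := by linarith
      _ ≤ 1 / S := by linarith
  rw [hset] at hp_mem
  have hpv : p + (v - u) ∈ ξ₂ := by
    have := mem_transl.1 hp_mem.1
    rwa [show p - x - u + (x + v) = p + (v - u) by abel] at this
  have huv : u = v := by
    have h1 : p + (v - u) ∈ ξ₂ ∩ Metric.ball p r := by
      refine ⟨hpv, ?_⟩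
      simp only [Metric.mem_ball, dist_eq_norm]
      calc ‖p + (v - u) - p‖ = ‖v - u‖ := by rw [show p + (v - u) - p = v - u by abel]
        _ ≤ ‖v‖ + ‖u‖ := norm_sub_le _ _
        _ < r := by linarith
    have h2 : p ∈ ξ₂ ∩ Metric.ball p r := ⟨hp₂, Metric.mem_ball_self hr⟩
    have := hud₂ p h1 h2
    have hvu : v - u = 0 := by
      have := congrArg (fun z => z - p) this
      simpa using this
    rw [sub_eq_zero] at hvu; exact hvu.symm
  rw [← huv] at hset
  -- step 2: agreement
  intro q hq
  rw [dist_eq_norm] at hq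
  have hqn : ‖q - x - u‖ ≤ 1 / S := by
    calc ‖q - x - u‖ ≤ ‖q - x‖ + ‖u‖ := norm_sub_le _ _
      _ ≤ 2 * R - ε' + ε' := by linarith
      _ ≤ 1 / S := by linarith
  constructor
  · intro hq₁
    have : q - x - u ∈ transl (x + u) ξ₁ ∩ Metric.closedBall 0 (1 / S) :=
      ⟨mem_transl.2 (by rw [show q - x - u + (x + u) = q by abel]; exact hq₁),
        mem_closedBall_zero_iff.2 hqn⟩
    rw [hset] at this
    have := mem_transl.1 this.1
    rwa [show q - x - u + (x + u) = q by abel] at this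
  · intro hq₂
    have : q - x - u ∈ transl (x + u) ξ₂ ∩ Metric.closedBall 0 (1 / S) :=
      ⟨mem_transl.2 (by rw [show q - x - u + (x + u) = q by abel]; exact hq₂),
        mem_closedBall_zero_iff.2 hqn⟩
    rw [← hset] at this
    have := mem_transl.1 this.1
    rwa [show q - x - u + (x + u) = q by abel] at this

lemma chain_lemma {d : ℕ} {r R : ℝ} (hr : 0 < r) (hrR : r ≤ R)
    {ξ₁ ξ₂ : Set (EuclideanSpace ℝ (Fin d))}
    (hud₂ : UnifDiscrete r ξ₂) (hrd₁ : RelDense R ξ₁)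
    (h0₁ : (0 : EuclideanSpace ℝ (Fin d)) ∈ ξ₁) (h0₂ : (0 : EuclideanSpace ℝ (Fin d)) ∈ ξ₂)
    {ε' : ℝ} (hε'0 : 0 < ε') (hε'r : ε' < r / 2) (hε'R : ε' < 1 / (2 * R))
    {n : ℝ} (hn : 0 ≤ n)
    (hclose : ∀ x : EuclideanSpace ℝ (Fin d), ‖x‖ ≤ n →
      ∃ S : ℝ, ∃ u v : EuclideanSpace ℝ (Fin d), 0 < S ∧ S ≤ ε' ∧ ‖u‖ ≤ S ∧ ‖v‖ ≤ S ∧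
        transl (x + u) ξ₁ ∩ Metric.closedBall 0 (1 / S) =
          transl (x + v) ξ₂ ∩ Metric.closedBall 0 (1 / S)) :
    ∀ z : EuclideanSpace ℝ (Fin d), ‖z‖ ≤ n → (z ∈ ξ₁ ↔ z ∈ ξ₂) := by
  have hR0 : 0 < R := hr.trans_le hrR
  have hε'R' : ε' < R := by linarith
  set t : ℝ := R - ε' with htdef
  have ht0 : 0 < t := by simp [htdef]; linarith
  have main : ∀ k : ℕ, ∀ y : EuclideanSpace ℝ (Fin d), ‖y‖ ≤ n → ‖y‖ ≤ k * t →
      ∃ p, p ∈ ξ₁ ∧ p ∈ ξ₂ ∧ dist p y ≤ R := by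
    intro k
    induction k with
    | zero =>
      intro y hyn hyk
      simp only [Nat.cast_zero, zero_mul] at hyk
      have : y = 0 := norm_le_zero_iff.1 hyk
      exact ⟨0, h0₁, h0₂, by simp [this]; linarith⟩
    | succ k ih =>
      intro y hyn hyk
      by_cases hcase : ‖y‖ ≤ k * t
      · exact ih y hyn hcase
      · push_neg at hcase
        have hy0 : 0 < ‖y‖ := lt_of_le_of_lt (by positivity) hcase
        set c : ℝ := (k * t) / ‖y‖ with hcdef
        have hc0 : 0 ≤ c := by positivity
        have hc1 : c ≤ 1 := by rw [hcdef, div_le_one hy0]; exact hcase.le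
        set y' := c • y with hy'def
        have hy'norm : ‖y'‖ = k * t := by
          rw [hy'def, norm_smul, Real.norm_eq_abs, abs_of_nonneg hc0, hcdef,
            div_mul_cancel₀ _ hy0.ne']
        have hy'n : ‖y'‖ ≤ n := by rw [hy'norm]; exact hcase.le.trans hyn
        obtain ⟨p, hp₁, hp₂, hpy'⟩ := ih y' hy'n (le_of_eq hy'norm)
        have hdyy' : dist y y' ≤ t := by
          rw [dist_eq_norm, hy'def, show y - c • y = (1 - c) • y by rw [sub_smul, one_smul],
            norm_smul, Real.norm_eq_abs, abs_of_nonneg (by linarith)]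
          have : (1 - c) * ‖y‖ = ‖y‖ - k * t := by
            rw [sub_mul, one_mul, hcdef, div_mul_cancel₀ _ hy0.ne']
          rw [this]
          push_cast at hyk
          linarith
        obtain ⟨w, hw₁, hwb⟩ := hrd₁ y
        rw [Metric.mem_closedBall] at hwb
        have hw₂ : w ∈ ξ₂ := by
          have hagree := agree_lemma hr hrR hud₂ hε'0 hε'r hε'R (hclose y' hy'n) hp₁ hp₂ hpy'
          exact (hagree w (by
            calc dist w y' ≤ dist w y + dist y y' := dist_triangle _ _ _
              _ ≤ R + t := by linarith
              _ = 2 * R - ε' := by rw [htdef]; ring)).1 hw₁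
        exact ⟨w, hw₁, hw₂, hwb⟩
  intro z hz
  obtain ⟨k, hk⟩ := exists_nat_ge (n / t)
  have hnk : n ≤ k * t := by rwa [div_le_iff₀ ht0] at hk
  obtain ⟨p, hp₁, hp₂, hpz⟩ := main k z hz (hz.trans hnk)
  exact agree_lemma hr hrR hud₂ hε'0 hε'r hε'R (hclose z hz) hp₁ hp₂ hpz z
    (by rw [dist_self]; linarith)

lemma sqrt2_facts : (1:ℝ)/2 ≤ 1 / Real.sqrt 2 ∧ 1 / Real.sqrt 2 ≤ 1 := by
  have h1 : (1:ℝ) ≤ Real.sqrt 2 := by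
    rw [show (1:ℝ) = Real.sqrt 1 from (Real.sqrt_one).symm]
    exact Real.sqrt_le_sqrt (by norm_num)
  have h2 : Real.sqrt 2 ≤ 2 := by
    nlinarith [Real.sq_sqrt (by norm_num : (0:ℝ) ≤ 2), Real.sqrt_nonneg 2]
  have h0 : (0:ℝ) < Real.sqrt 2 := by linarith
  constructor
  · rw [div_le_div_iff₀ (by norm_num) h0]; linarith
  · rw [div_le_one h0]; exact h1

lemma key2 {d : ℕ} {r R : ℝ} (hr : 0 < r) (hrR : r ≤ R)
    {ω ξ : Set (EuclideanSpace ℝ (Fin d))} (hω : IsDelone r R ω)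
    (hξ : ξ ∈ hull r R ω) {M : ℝ} (hM : 1 ≤ M) :
    ∃ w ∈ ω, ∃ s ∈ Metric.closedBall (0 : EuclideanSpace ℝ (Fin d)) R,
      ∀ z : EuclideanSpace ℝ (Fin d), ‖z‖ ≤ M → (z ∈ ξ ↔ z + s ∈ transl w ω) := by
  have hM0 : 0 < M + 1 := by linarith
  set δ : ℝ := 1 / (M + 1) with hδdef
  have hδ0 : 0 < δ := by positivity
  obtain ⟨x, hx⟩ := hξ.2 δ hδ0
  have hδhalf : δ ≤ 1 / Real.sqrt 2 := by
    have : δ ≤ 1/2 := by rw [hδdef, div_le_div_iff₀ hM0 (by norm_num)]; linarith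
    linarith [sqrt2_facts.1]
  obtain ⟨S, u, v, hS0, hSδ, hu, hv, heq⟩ :=
    exists_S' hr hrR (isDelone_transl hω x) hξ.1 hx hδhalf
  have hSinv : M + 1 ≤ 1 / S := by
    rw [le_div_iff₀ hS0]
    rw [hδdef, lt_div_iff₀ hM0] at hSδ
    linarith
  rw [transl_transl] at heq
  set t := x + u - v with htdef
  obtain ⟨w, hw, hwb⟩ := hω.2 t
  rw [Metric.mem_closedBall, dist_eq_norm] at hwb
  refine ⟨w, hw, t - w, mem_closedBall_zero_iff.2 (by rwa [show t - w = -(w - t) by abel, norm_neg]), ?_⟩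
  intro z hz
  have hmem : z ∈ ξ ↔ z + t ∈ ω := by
    constructor
    · intro hzξ
      have h1 : z - v ∈ transl v ξ ∩ Metric.closedBall 0 (1 / S) := by
        refine ⟨mem_transl.2 (by rwa [sub_add_cancel]), mem_closedBall_zero_iff.2 ?_⟩
        calc ‖z - v‖ ≤ ‖z‖ + ‖v‖ := norm_sub_le _ _
          _ ≤ M + 1 := by linarith [hSδ.le.trans (by rw [hδdef, div_le_one hM0]; linarith : δ ≤ 1)]
          _ ≤ 1 / S := hSinv
      rw [← heq] at h1
      have := mem_transl.1 h1.1
      rwa [show z - v + (x + u) = z + t by rw [htdef]; abel] at this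
    · intro hzω
      have h1 : z - v ∈ transl (x + u) ω ∩ Metric.closedBall 0 (1 / S) := by
        refine ⟨mem_transl.2 (by rwa [show z - v + (x + u) = z + t by rw [htdef]; abel]),
          mem_closedBall_zero_iff.2 ?_⟩
        calc ‖z - v‖ ≤ ‖z‖ + ‖v‖ := norm_sub_le _ _
          _ ≤ M + 1 := by linarith [hSδ.le.trans (by rw [hδdef, div_le_one hM0]; linarith : δ ≤ 1)]
          _ ≤ 1 / S := hSinv
      rw [heq] at h1
      have := mem_transl.1 h1.1
      rwa [sub_add_cancel] at this
  rw [hmem, mem_transl, show z + (t - w) + w = z + t by abel]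

theorem representatives_separated {d : ℕ} (r R : ℝ) (hr : 0 < r) (hrR : r ≤ R)
    (ω : Set (EuclideanSpace ℝ (Fin d))) (hω : IsDelone r R ω) (hflc : FLC ω)
    (n : ℕ) (hn : 1 ≤ n) (Ξ : Finset (Set (EuclideanSpace ℝ (Fin d))))
    (hsub : (Ξ : Set (Set (EuclideanSpace ℝ (Fin d)))) ⊆ hull r R ω)
    (hzero : ∀ ξ ∈ Ξ, (0 : EuclideanSpace ℝ (Fin d)) ∈ ξ)
    (hrepr : patches ω (n : ℝ) =
      {P | ∃ ξ ∈ Ξ, P = ξ ∩ Metric.closedBall (0 : EuclideanSpace ℝ (Fin d)) (n : ℝ)})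
    (hinj : ∀ ξ₁ ∈ Ξ, ∀ ξ₂ ∈ Ξ,
      ξ₁ ∩ Metric.closedBall (0 : EuclideanSpace ℝ (Fin d)) (n : ℝ) =
        ξ₂ ∩ Metric.closedBall (0 : EuclideanSpace ℝ (Fin d)) (n : ℝ) → ξ₁ = ξ₂) :
    ∀ ε : ℝ, 0 < ε → ε < min (min (1 / Real.sqrt 2) (r / 2)) (1 / (2 * R)) →
      IsSepHull (n : ℝ) ε (Ξ : Set (Set (EuclideanSpace ℝ (Fin d)))) ∧
        (patches ω (n : ℝ)).ncard ≤ sepNumHull r R ω (n : ℝ) ε := by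
  intro ε hε0 hεlt
  have hR0 : 0 < R := hr.trans_le hrR
  have hn1 : (1:ℝ) ≤ (n:ℝ) := by exact_mod_cast hn
  have hn0 : (0:ℝ) ≤ (n:ℝ) := by linarith
  set m := min (min (1 / Real.sqrt 2) (r / 2)) (1 / (2 * R)) with hmdef
  have hm1 : m ≤ 1 / Real.sqrt 2 := (min_le_left _ _).trans (min_le_left _ _)
  have hm2 : m ≤ r / 2 := (min_le_left _ _).trans (min_le_right _ _)
  have hm3 : m ≤ 1 / (2 * R) := min_le_right _ _
  have hε1 : ε ≤ 1 := (hεlt.le.trans hm1).trans sqrt2_facts.2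
  -- Part 1
  have hsep : IsSepHull (n : ℝ) ε (Ξ : Set (Set (EuclideanSpace ℝ (Fin d)))) := by
    intro ξ₁ h1 ξ₂ h2 hne
    by_contra hcon
    push_neg at hcon
    have hD1 := (hsub h1).1
    have hD2 := (hsub h2).1
    set ε' := (ε + m) / 2 with hε'def
    have hεε' : ε < ε' := by rw [hε'def]; linarith
    have hε'm : ε' < m := by rw [hε'def]; linarith
    have hε'0 : 0 < ε' := hε0.trans hεε'
    have hε'a : ε' ≤ 1 / Real.sqrt 2 := (hε'm.le).trans hm1
    have hε'b : ε' < r / 2 := hε'm.trans_le hm2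
    have hε'c : ε' < 1 / (2 * R) := hε'm.trans_le hm3
    have hclose : ∀ x : EuclideanSpace ℝ (Fin d), ‖x‖ ≤ (n:ℝ) →
        ∃ S : ℝ, ∃ u v : EuclideanSpace ℝ (Fin d), 0 < S ∧ S ≤ ε' ∧ ‖u‖ ≤ S ∧ ‖v‖ ≤ S ∧
          transl (x + u) ξ₁ ∩ Metric.closedBall 0 (1 / S) =
            transl (x + v) ξ₂ ∩ Metric.closedBall 0 (1 / S) := by
      intro x hx
      have hd := hcon x (mem_closedBall_zero_iff.2 hx)
      obtain ⟨S, u, v, hS0, hSlt, hu, hv, heq⟩ :=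
        exists_S' hr hrR (isDelone_transl hD1 x) (isDelone_transl hD2 x)
          (lt_of_le_of_lt hd hεε') hε'a
      rw [transl_transl, transl_transl] at heq
      exact ⟨S, u, v, hS0, hSlt.le, hu, hv, heq⟩
    have hiff := chain_lemma hr hrR hD2.1 hD1.2 (hzero ξ₁ h1) (hzero ξ₂ h2)
      hε'0 hε'b hε'c hn0 hclose
    have heq : ξ₁ ∩ Metric.closedBall (0 : EuclideanSpace ℝ (Fin d)) (n : ℝ) =
        ξ₂ ∩ Metric.closedBall (0 : EuclideanSpace ℝ (Fin d)) (n : ℝ) := by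
      ext z
      simp only [Set.mem_inter_iff, mem_closedBall_zero_iff]
      constructor
      · rintro ⟨hz, hzn⟩; exact ⟨(hiff z hzn).1 hz, hzn⟩
      · rintro ⟨hz, hzn⟩; exact ⟨(hiff z hzn).2 hz, hzn⟩
    exact hne (hinj ξ₁ h1 ξ₂ h2 heq)
  refine ⟨hsep, ?_⟩
  -- Part 2
  set M : ℝ := (n:ℝ) + 1/ε + 1 with hMdef
  have hεinv : 0 < 1/ε := by positivity
  have hM1 : 1 ≤ M := by rw [hMdef]; linarith
  set K : ℝ := M + R with hKdef
  have hK0 : 0 < K := by rw [hKdef]; linarith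
  have hfin := hflc K hK0
  have hcov : Metric.closedBall (0 : EuclideanSpace ℝ (Fin d)) R ⊆
      ⋃ c : EuclideanSpace ℝ (Fin d), Metric.ball c (ε/2) :=
    fun y _ => Set.mem_iUnion.2 ⟨y, Metric.mem_ball_self (by linarith)⟩
  obtain ⟨F, hF⟩ := (isCompact_closedBall (0 : EuclideanSpace ℝ (Fin d)) R).elim_finite_subcover
    (fun c : EuclideanSpace ℝ (Fin d) => Metric.ball c (ε/2)) (fun c => Metric.isOpen_ball) hcov
  have hbound : ∀ Ξ' : Finset (Set (EuclideanSpace ℝ (Fin d))),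
      (Ξ' : Set (Set (EuclideanSpace ℝ (Fin d)))) ⊆ hull r R ω →
      IsSepHull (n : ℝ) ε (Ξ' : Set (Set (EuclideanSpace ℝ (Fin d)))) →
      Ξ'.card ≤ (hfin.toFinset ×ˢ F).card := by
    intro Ξ' hsub' hsep'
    have htot : ∀ ξ : Set (EuclideanSpace ℝ (Fin d)),
        ∃ w s c : EuclideanSpace ℝ (Fin d), ξ ∈ Ξ' →
          w ∈ ω ∧ ‖s‖ ≤ R ∧ c ∈ F ∧ dist s c < ε/2 ∧
          ∀ z : EuclideanSpace ℝ (Fin d), ‖z‖ ≤ M → (z ∈ ξ ↔ z + s ∈ transl w ω) := by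
      intro ξ
      by_cases hξ : ξ ∈ Ξ'
      · obtain ⟨w, hw, s, hs, hmem⟩ := key2 hr hrR hω (hsub' hξ) hM1
        have hsF := hF hs
        simp only [Set.mem_iUnion] at hsF
        obtain ⟨c, hcF, hsc⟩ := hsF
        exact ⟨w, s, c, fun _ => ⟨hw, mem_closedBall_zero_iff.1 hs, hcF,
          Metric.mem_ball.1 hsc, hmem⟩⟩
      · exact ⟨0, 0, 0, fun h => absurd h hξ⟩
    choose w s c hprop using htot
    apply Finset.card_le_card_of_injOn
      (fun ξ => (transl (w ξ) ω ∩ Metric.closedBall 0 K, c ξ))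
    · intro ξ hξ
      obtain ⟨hw, _, hcF, _, _⟩ := hprop ξ hξ
      rw [Finset.mem_coe, Finset.mem_product]
      exact ⟨hfin.mem_toFinset.2 ⟨w ξ, hw, rfl⟩, hcF⟩
    · intro ξ₁ hξ₁ ξ₂ hξ₂ hfeq
      by_contra hne
      obtain ⟨hw₁, hs₁, _, hsc₁, hmem₁⟩ := hprop ξ₁ (Finset.mem_coe.1 hξ₁)
      obtain ⟨hw₂, hs₂, _, hsc₂, hmem₂⟩ := hprop ξ₂ (Finset.mem_coe.1 hξ₂)
      have hPeq : transl (w ξ₁) ω ∩ Metric.closedBall 0 K =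
          transl (w ξ₂) ω ∩ Metric.closedBall 0 K := congrArg Prod.fst hfeq
      have hceq : c ξ₁ = c ξ₂ := congrArg Prod.snd hfeq
      have hss : ‖s ξ₁ - s ξ₂‖ ≤ ε := by
        have h1 := dist_triangle (s ξ₁) (c ξ₁) (s ξ₂)
        have h2 : dist (c ξ₁) (s ξ₂) < ε/2 := by rw [hceq, dist_comm]; exact hsc₂
        rw [← dist_eq_norm]
        linarith
      obtain ⟨x, hxball, hd⟩ := hsep' ξ₁ hξ₁ ξ₂ hξ₂ hne
      have hxn : ‖x‖ ≤ (n:ℝ) := mem_closedBall_zero_iff.1 hxball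
      have hchain : ∀ z : EuclideanSpace ℝ (Fin d), ‖z‖ ≤ 1/ε →
          (z + (x + 0) ∈ ξ₁ ↔ z + (x + (s ξ₁ - s ξ₂)) ∈ ξ₂) := by
        intro z hzn
        have h1 : ‖z + x‖ ≤ M := by
          calc ‖z + x‖ ≤ ‖z‖ + ‖x‖ := norm_add_le _ _
            _ ≤ M := by rw [hMdef]; linarith
        have h2 : ‖z + (x + (s ξ₁ - s ξ₂))‖ ≤ M := by
          calc ‖z + (x + (s ξ₁ - s ξ₂))‖ ≤ ‖z‖ + ‖x‖ + ‖s ξ₁ - s ξ₂‖ := by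
                calc ‖z + (x + (s ξ₁ - s ξ₂))‖ = ‖(z + x) + (s ξ₁ - s ξ₂)‖ := by
                      rw [show z + (x + (s ξ₁ - s ξ₂)) = (z + x) + (s ξ₁ - s ξ₂) by abel]
                  _ ≤ ‖z + x‖ + ‖s ξ₁ - s ξ₂‖ := norm_add_le _ _
                  _ ≤ ‖z‖ + ‖x‖ + ‖s ξ₁ - s ξ₂‖ := by linarith [norm_add_le z x]
            _ ≤ M := by rw [hMdef]; linarith
        have h3 : ‖z + x + s ξ₁‖ ≤ K := by
          calc ‖z + x + s ξ₁‖ ≤ ‖z + x‖ + ‖s ξ₁‖ := norm_add_le _ _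
            _ ≤ K := by rw [hKdef]; linarith
        rw [add_zero]
        calc z + x ∈ ξ₁ ↔ z + x + s ξ₁ ∈ transl (w ξ₁) ω := hmem₁ (z + x) h1
          _ ↔ z + x + s ξ₁ ∈ transl (w ξ₂) ω := by
              constructor
              · intro hh
                exact ((Set.ext_iff.1 hPeq (z + x + s ξ₁)).1
                  ⟨hh, mem_closedBall_zero_iff.2 h3⟩).1
              · intro hh
                exact ((Set.ext_iff.1 hPeq (z + x + s ξ₁)).2
                  ⟨hh, mem_closedBall_zero_iff.2 h3⟩).1
          _ ↔ z + (x + (s ξ₁ - s ξ₂)) ∈ ξ₂ := by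
              rw [hmem₂ _ h2, show z + (x + (s ξ₁ - s ξ₂)) + s ξ₂ = z + x + s ξ₁ by abel]
      refine absurd hd (not_lt.2 (deloneDist_le_of_mem ⟨hε0, 0,
        mem_closedBall_zero_iff.2 (by rw [norm_zero]; exact hε0.le),
        s ξ₁ - s ξ₂, mem_closedBall_zero_iff.2 hss, ?_⟩))
      rw [transl_transl, transl_transl]
      ext z
      simp only [Set.mem_inter_iff, mem_transl, mem_closedBall_zero_iff]
      constructor
      · rintro ⟨hz, hzn⟩; exact ⟨(hchain z hzn).1 hz, hzn⟩
      · rintro ⟨hz, hzn⟩; exact ⟨(hchain z hzn).2 hz, hzn⟩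
  have hbddA : BddAbove {k : ℕ | ∃ Ξ' : Finset (Set (EuclideanSpace ℝ (Fin d))),
      (Ξ' : Set (Set (EuclideanSpace ℝ (Fin d)))) ⊆ hull r R ω ∧
      IsSepHull (n : ℝ) ε (Ξ' : Set (Set (EuclideanSpace ℝ (Fin d)))) ∧ Ξ'.card = k} :=
    ⟨(hfin.toFinset ×ˢ F).card, by rintro k ⟨Ξ', ha, hb, rfl⟩; exact hbound Ξ' ha hb⟩
  have hcard : Ξ.card ≤ sepNumHull r R ω (n : ℝ) ε := by
    unfold sepNumHull
    exact le_csSup hbddA ⟨Ξ, hsub, hsep, rfl⟩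
  have himg : patches ω (n : ℝ) =
      (fun ξ => ξ ∩ Metric.closedBall (0 : EuclideanSpace ℝ (Fin d)) (n : ℝ)) ''
        (Ξ : Set (Set (EuclideanSpace ℝ (Fin d)))) := by
    rw [hrepr]
    ext P
    simp only [Set.mem_image, Finset.mem_coe, Set.mem_setOf_eq]
    constructor
    · rintro ⟨ξ, hξ, rfl⟩; exact ⟨ξ, hξ, rfl⟩
    · rintro ⟨ξ, hξ, rfl⟩; exact ⟨ξ, hξ, rfl⟩
  calc (patches ω (n : ℝ)).ncard
      = ((fun ξ => ξ ∩ Metric.closedBall (0 : EuclideanSpace ℝ (Fin d)) (n : ℝ)) ''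
        (Ξ : Set (Set (EuclideanSpace ℝ (Fin d))))).ncard := by rw [himg]
    _ ≤ (Ξ : Set (Set (EuclideanSpace ℝ (Fin d)))).ncard := Set.ncard_image_le Ξ.finite_toSet
    _ = Ξ.card := Set.ncard_coe_finset Ξ
    _ ≤ sepNumHull r R ω (n : ℝ) ε := hcard
end
end

section
/- Let a_n = 1 + e + e² + ⋯ + e^{n−1} for n ∈ ℕ (where e is Euler's number), and let Λ = {±a_n : n ∈ ℕ} ⊂ ℝ. Then Λ is uniformly discrete but not relatively dense, and Λ has finite local complexity: for every D > 0, the set of D-patches {(−x + Λ) ∩ [−D, D] : x ∈ Λ} is finite. -/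
open Filter

noncomputable section

/-- `a n = 1 + e + e² + ⋯ + e^{n-1}`. -/
def geomE (n : ℕ) : ℝ := ∑ i ∈ Finset.range n, Real.exp 1 ^ i

lemma geomE_succ (n : ℕ) : geomE (n+1) = geomE n + Real.exp 1 ^ n := by
  simp [geomE, Finset.sum_range_succ]

lemma exp_pow_ge (n : ℕ) : (n : ℝ) + 1 ≤ Real.exp 1 ^ n := by
  have h := Real.add_one_le_exp (n : ℝ)
  have h2 : Real.exp ((n:ℝ)) = Real.exp 1 ^ n := by
    rw [← Real.exp_nat_mul]; norm_num
  linarith [h2 ▸ h]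

lemma geomE_mono : Monotone geomE := by
  apply monotone_nat_of_le_succ
  intro n
  rw [geomE_succ]
  nlinarith [exp_pow_ge n, Nat.cast_nonneg (α := ℝ) n]

lemma geomE_ge (n : ℕ) : (n : ℝ) ≤ geomE n := by
  induction n with
  | zero => simp [geomE]
  | succ n ih =>
    rw [geomE_succ]
    push_cast
    nlinarith [exp_pow_ge n, Nat.cast_nonneg (α := ℝ) n]

lemma geomE_gap {k l : ℕ} (h : k < l) : geomE k + (l : ℝ) ≤ geomE l := by
  obtain ⟨j, rfl⟩ := Nat.exists_eq_add_of_lt h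
  have h1 : geomE k ≤ geomE (k + j) := geomE_mono (by omega)
  have h2 := geomE_succ (k + j)
  have h3 := exp_pow_ge (k + j)
  push_cast at h3 ⊢
  nlinarith

lemma geomE_ge_one {n : ℕ} (hn : 1 ≤ n) : (1:ℝ) ≤ geomE n := by
  have := geomE_ge n
  have : (1:ℝ) ≤ (n:ℝ) := by exact_mod_cast hn
  linarith [geomE_ge n]

lemma key {n m : ℕ} (hn : 1 ≤ n) (hm : 1 ≤ m) {y x : ℝ}
    (hy : y = geomE m ∨ y = -geomE m) (hx : x = geomE n ∨ x = -geomE n)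
    (hne : y ≠ x) : (n : ℝ) ≤ |y - x| := by
  have hgn := geomE_ge n
  have hgm1 := geomE_ge_one hm
  have hposgap : ∀ k l : ℕ, k ≠ l → max (k:ℝ) (l:ℝ) ≤ |geomE k - geomE l| := by
    intro k l hkl
    rcases lt_or_gt_of_ne hkl with h | h
    · have hg := geomE_gap h
      have hkl' : (k:ℝ) ≤ (l:ℝ) := by exact_mod_cast h.le
      rw [abs_sub_comm, abs_of_nonneg (by linarith [Nat.cast_nonneg (α := ℝ) k])]
      have : max (k:ℝ) (l:ℝ) = (l:ℝ) := max_eq_right hkl'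
      rw [this]
      linarith [Nat.cast_nonneg (α := ℝ) k]
    · have hg := geomE_gap h
      have hkl' : (l:ℝ) ≤ (k:ℝ) := by exact_mod_cast h.le
      rw [abs_of_nonneg (by linarith [Nat.cast_nonneg (α := ℝ) l])]
      have : max (k:ℝ) (l:ℝ) = (k:ℝ) := max_eq_left hkl'
      rw [this]
      linarith [Nat.cast_nonneg (α := ℝ) l]
  rcases hy with rfl | rfl <;> rcases hx with rfl | rfl
  · have hmn : m ≠ n := fun h => hne (by rw [h])
    have := hposgap m n hmn
    have h2 : (n:ℝ) ≤ max (m:ℝ) (n:ℝ) := le_max_right _ _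
    linarith
  · rw [abs_of_nonneg (by linarith)]
    linarith
  · rw [abs_of_nonpos (by linarith), neg_sub]
    linarith
  · have hmn : m ≠ n := fun h => hne (by rw [h])
    have := hposgap m n hmn
    have h2 : (n:ℝ) ≤ max (m:ℝ) (n:ℝ) := le_max_right _ _
    rw [show -geomE m - -geomE n = -(geomE m - geomE n) by ring, abs_neg]
    linarith

/-- `Λ = {± a n : n ≥ 1}`. -/
def Lam : Set ℝ := {x | ∃ n : ℕ, 1 ≤ n ∧ (x = geomE n ∨ x = -geomE n)}

/-- The set of `D`-patches of `Λ`: `(−x + Λ) ∩ [−D, D]` for `x ∈ Λ`. -/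
def patchesLam (D : ℝ) : Set (Set ℝ) :=
  {P | ∃ x ∈ Lam, P = ((fun y => y - x) '' Lam) ∩ Set.Icc (-D) D}

theorem lam_unifDiscrete_not_relDense_flc :
    (∃ r : ℝ, 0 < r ∧ ∀ x y : ℝ, x ∈ Lam → y ∈ Lam → x ≠ y → r ≤ |x - y|) ∧
    (¬ ∃ R : ℝ, 0 < R ∧ ∀ x : ℝ, (Lam ∩ Metric.closedBall x R).Nonempty) ∧
    (∀ D : ℝ, 0 < D → (patchesLam D).Finite) := by
  refine ⟨⟨1, one_pos, ?_⟩, ?_, ?_⟩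
  · rintro x y ⟨n, hn, hxe⟩ ⟨m, hm, hye⟩ hne
    have h := key hm hn hxe hye hne
    have : (1:ℝ) ≤ (m:ℝ) := by exact_mod_cast hm
    linarith
  · rintro ⟨R, hR, hball⟩
    set n := ⌈2*R+1⌉₊ with hn
    have hn1 : 1 ≤ n := Nat.one_le_ceil_iff.mpr (by linarith)
    have hceil : 2*R+1 ≤ (n:ℝ) := Nat.le_ceil _
    obtain ⟨y, hyL, hyB⟩ := hball (geomE n + R + 1)
    rw [Metric.mem_closedBall, Real.dist_eq, abs_le] at hyB
    obtain ⟨m, hm, hye⟩ := hyL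
    have hgm := geomE_ge m
    have hgm1 : (1:ℝ) ≤ geomE m := geomE_ge_one hm
    rcases hye with rfl | rfl
    · -- y = geomE m
      have hmn : n < m := by
        by_contra h
        push_neg at h
        have := geomE_mono h
        linarith [hyB.1]
      have hg := geomE_gap hmn
      have : (n:ℝ) + 1 ≤ (m:ℝ) := by exact_mod_cast hmn
      linarith [hyB.2]
    · linarith [hyB.1, geomE_ge n, Nat.cast_nonneg (α := ℝ) n]
  · intro D hD
    set N := ⌈D⌉₊ + 1 with hN
    have hDN : D < (N:ℝ) := by
      have := Nat.le_ceil D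
      push_cast [hN]
      linarith
    have hpatch : ∀ x : ℝ, x ∈ Lam →
        (∃ n, 1 ≤ n ∧ n ≤ N ∧ (x = geomE n ∨ x = -geomE n)) ∨
        ((fun y => y - x) '' Lam) ∩ Set.Icc (-D) D = {0} := by
      rintro x ⟨n, hn, hxe⟩
      by_cases hnN : n ≤ N
      · exact Or.inl ⟨n, hn, hnN, hxe⟩
      · right
        push_neg at hnN
        have hDn : D < (n:ℝ) := lt_of_lt_of_le hDN (by exact_mod_cast hnN.le)
        ext z
        simp only [Set.mem_inter_iff, Set.mem_image, Set.mem_Icc, Set.mem_singleton_iff]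
        constructor
        · rintro ⟨⟨y, hyL, rfl⟩, hz1, hz2⟩
          obtain ⟨m, hm, hye⟩ := hyL
          by_contra hz0
          have hyx : y ≠ x := fun h => hz0 (by simp [h])
          have h1 := key hn hm hye hxe hyx
          have h2 : |y - x| ≤ D := abs_le.mpr ⟨hz1, hz2⟩
          linarith
        · rintro rfl
          exact ⟨⟨x, ⟨n, hn, hxe⟩, sub_self x⟩, by constructor <;> linarith⟩
    have hfin : (insert ({0} : Set ℝ)
        ((fun x : ℝ => ((fun y => y - x) '' Lam) ∩ Set.Icc (-D) D) ''
          ((fun k : ℕ => geomE k) '' Set.Icc 1 N ∪ (fun k : ℕ => -geomE k) '' Set.Icc 1 N))).Finite := by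
      apply Set.Finite.insert
      apply Set.Finite.image
      exact ((Set.finite_Icc 1 N).image _).union ((Set.finite_Icc 1 N).image _)
    apply hfin.subset
    rintro P ⟨x, hxL, rfl⟩
    rcases hpatch x hxL with ⟨n, h1, h2, he⟩ | h
    · refine Set.mem_insert_of_mem _ ⟨x, ?_, rfl⟩
      rcases he with rfl | rfl
      · exact Or.inl ⟨n, ⟨h1, h2⟩, rfl⟩
      · exact Or.inr ⟨n, ⟨h1, h2⟩, rfl⟩
    · rw [h]
      exact Set.mem_insert _ _
end
end
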